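/- The expected number of directed Hamilton paths in a uniformly random tournament on n vertices is n!/2^{n-1}; hence some tournament on n vertices contains at least n!/2^{n-1} directed Hamilton paths. -/

import Mathlib

/-- An orientation of `K_n`: a choice of direction for each edge `{u,v}` with `u < v`. -/
abbrev Orientation' (n : ℕ) : Type := {p : Fin n × Fin n // p.1 < p.2} → Bool

/-- The tournament determined by the orientation `o`: the arc `(u,v)` is present iff
the edge `{u,v}` is oriented from `u` to `v`. -/
def arcOf (n : ℕ) (o : Orientation' n) (u v : Fin n) : Prop :=
  if h : u < v then o ⟨(u, v), h⟩ = true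
  else if h : v < u then o ⟨(v, u), h⟩ = false
  else False

/-- The number of directed Hamilton paths of the tournament determined by `o`
(as sequences, i.e. permutations `τ` with all arcs `(τ i, τ (i+1))` present). -/
noncomputable def hamCount (n : ℕ) (o : Orientation' n) : ℕ :=
  Nat.card {τ : Equiv.Perm (Fin n) //
    ∀ i : ℕ, ∀ h : i + 1 < n, arcOf n o (τ ⟨i, by omega⟩) (τ ⟨i + 1, h⟩)}

/-- The edge index of an unordered pair. -/
def eOf {n : ℕ} (u v : Fin n) (h : u ≠ v) : {p : Fin n × Fin n // p.1 < p.2} :=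
  if hl : u < v then ⟨(u, v), hl⟩ else ⟨(v, u), (h.lt_or_gt).resolve_left hl⟩

lemma arc_iff {n : ℕ} (o : Orientation' n) (u v : Fin n) (h : u ≠ v) :
    arcOf n o u v ↔ o (eOf u v h) = decide (u < v) := by
  unfold arcOf eOf
  rcases h.lt_or_gt with hl | hl
  · simp [hl, lt_asymm hl]
  · simp [hl, lt_asymm hl]

lemma eOf_cases {n : ℕ} {u v u' v' : Fin n} {h : u ≠ v} {h' : u' ≠ v'}
    (he : eOf u v h = eOf u' v' h') : (u = u' ∧ v = v') ∨ (u = v' ∧ v = u') := by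
  unfold eOf at he
  split_ifs at he <;>
    · simp only [Subtype.mk.injEq, Prod.mk.injEq] at he
      tauto

lemma card_fixed {α ι : Type*} [Fintype α] [Fintype ι]
    (e : ι → α) (he : Function.Injective e) (b : ι → Bool) :
    Nat.card {o : α → Bool // ∀ k, o (e k) = b k}
      = 2 ^ (Fintype.card α - Fintype.card ι) := by
  classical
  have equiv : {o : α → Bool // ∀ k, o (e k) = b k} ≃ ({a : α // a ∉ Set.range e} → Bool) :=
    { toFun := fun o a => o.1 a.1
      invFun := fun f =>
        ⟨fun a => if h : a ∈ Set.range e then b h.choose else f ⟨a, h⟩, by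
          intro k
          have h : e k ∈ Set.range e := ⟨k, rfl⟩
          have hc : e h.choose = e k := h.choose_spec
          simp only [dif_pos h, he hc]⟩
      left_inv := by
        intro o
        ext a
        by_cases h : a ∈ Set.range e
        · have hc : e h.choose = a := h.choose_spec
          simp only [dif_pos h]
          rw [← o.2 h.choose, hc]
        · simp [h]
      right_inv := by
        intro f
        funext a
        simp [a.2] }
  rw [Nat.card_congr equiv, Nat.card_fun]
  have h1 : Nat.card Bool = 2 := by simp [Nat.card_eq_fintype_card]
  have h2 : Nat.card {a : α // a ∉ Set.range e} = Fintype.card α - Fintype.card ι := by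
    rw [Nat.card_eq_fintype_card]
    rw [Fintype.card_subtype_compl]
    congr 1
    exact Set.card_range_of_injective he
  rw [h1, h2]

/-- The `k`-th vertex along `τ`. -/
def vtx {n : ℕ} (τ : Equiv.Perm (Fin n)) (k : ℕ) (hk : k < n) : Fin n := τ ⟨k, hk⟩

lemma vtx_ne {n : ℕ} (τ : Equiv.Perm (Fin n)) {k : ℕ} (hk : k + 1 < n) :
    vtx τ k (by omega) ≠ vtx τ (k + 1) hk := by
  intro h
  have := τ.injective h
  simp only [Fin.mk.injEq] at this
  omega

/-- The edge required by `τ` at step `k`. -/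
def edgτ {n : ℕ} (τ : Equiv.Perm (Fin n)) (k : Fin (n - 1)) : {p : Fin n × Fin n // p.1 < p.2} :=
  eOf (vtx τ k (by have := k.2; omega)) (vtx τ (k + 1) (by have := k.2; omega))
    (vtx_ne τ (by have := k.2; omega))

lemma edgτ_inj {n : ℕ} (τ : Equiv.Perm (Fin n)) : Function.Injective (edgτ τ) := by
  intro k k' h
  rcases eOf_cases h with ⟨h1, h2⟩ | ⟨h1, h2⟩ <;>
  · have e1 := τ.injective h1
    have e2 := τ.injective h2
    simp only [Fin.mk.injEq] at e1 e2
    exact Fin.ext (by omega)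

lemma good_iff {n : ℕ} (o : Orientation' n) (τ : Equiv.Perm (Fin n)) :
    (∀ i : ℕ, ∀ h : i + 1 < n, arcOf n o (τ ⟨i, by omega⟩) (τ ⟨i + 1, h⟩)) ↔
    (∀ k : Fin (n - 1), o (edgτ τ k) =
      decide (vtx τ k (by have := k.2; omega) < vtx τ (k + 1) (by have := k.2; omega))) := by
  constructor
  · intro H k
    have hk : (k : ℕ) + 1 < n := by have := k.2; omega
    exact (arc_iff o _ _ (vtx_ne τ hk)).mp (H k hk)
  · intro H i h
    exact (arc_iff o _ _ (vtx_ne τ h)).mpr (H ⟨i, by omega⟩)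

/-- The expected number of directed Hamilton paths in a uniformly random tournament on
`n` vertices is `n!/2^(n-1)`; hence some tournament on `n` vertices contains at least
`n!/2^(n-1)` directed Hamilton paths. -/
theorem expected_ham_paths_and_szele (n : ℕ) :
    (∑ o : Orientation' n, (hamCount n o : ℝ)) / (Fintype.card (Orientation' n) : ℝ)
        = (Nat.factorial n : ℝ) / 2 ^ (n - 1) ∧
    ∃ o : Orientation' n, (Nat.factorial n : ℝ) / 2 ^ (n - 1) ≤ (hamCount n o : ℝ) := by
  classical
  set E := Fintype.card {p : Fin n × Fin n // p.1 < p.2} with hE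
  have hEk : n - 1 ≤ E := by
    calc n - 1 = Fintype.card (Fin (n - 1)) := by simp
    _ ≤ E := Fintype.card_le_of_injective _ (edgτ_inj (1 : Equiv.Perm (Fin n)))
  have hcardO : Fintype.card (Orientation' n) = 2 ^ E := by
    rw [Fintype.card_fun, Fintype.card_bool]
  -- the double-counting identity in ℕ
  have hsum : ∑ o : Orientation' n, hamCount n o = Nat.factorial n * 2 ^ (E - (n - 1)) := by
    have step1 : ∀ o : Orientation' n, hamCount n o =
        ∑ τ : Equiv.Perm (Fin n),
          if (∀ i : ℕ, ∀ h : i + 1 < n, arcOf n o (τ ⟨i, by omega⟩) (τ ⟨i + 1, h⟩)) then 1 else 0 := by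
      intro o
      rw [Finset.sum_boole, Nat.cast_id, hamCount, Nat.card_eq_fintype_card,
        Fintype.card_subtype]
    calc ∑ o : Orientation' n, hamCount n o
        = ∑ o : Orientation' n, ∑ τ : Equiv.Perm (Fin n),
            if (∀ i : ℕ, ∀ h : i + 1 < n, arcOf n o (τ ⟨i, by omega⟩) (τ ⟨i + 1, h⟩)) then 1 else 0 := by
          exact Finset.sum_congr rfl fun o _ => step1 o
      _ = ∑ τ : Equiv.Perm (Fin n), ∑ o : Orientation' n,
            if (∀ i : ℕ, ∀ h : i + 1 < n, arcOf n o (τ ⟨i, by omega⟩) (τ ⟨i + 1, h⟩)) then 1 else 0 :=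
          Finset.sum_comm
      _ = ∑ τ : Equiv.Perm (Fin n), 2 ^ (E - (n - 1)) := by
          refine Finset.sum_congr rfl fun τ _ => ?_
          have : ∀ o : Orientation' n,
              (∀ i : ℕ, ∀ h : i + 1 < n, arcOf n o (τ ⟨i, by omega⟩) (τ ⟨i + 1, h⟩)) ↔
              (∀ k : Fin (n - 1), o (edgτ τ k) =
                decide (vtx τ k (by have := k.2; omega) < vtx τ (k + 1) (by have := k.2; omega))) :=
            fun o => good_iff o τ
          simp only [this]
          rw [Finset.sum_boole, Nat.cast_id, ← Fintype.card_subtype, ← Nat.card_eq_fintype_card]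
          rw [card_fixed _ (edgτ_inj τ)]
          simp
          rfl
      _ = Nat.factorial n * 2 ^ (E - (n - 1)) := by
          rw [Finset.sum_const, smul_eq_mul, Finset.card_univ, Fintype.card_perm, Fintype.card_fin]
  -- to the reals
  have hsumR : ∑ o : Orientation' n, (hamCount n o : ℝ)
      = (Nat.factorial n : ℝ) * 2 ^ (E - (n - 1)) := by
    rw [← Nat.cast_sum, hsum]
    push_cast
    ring
  have h2pos : (0 : ℝ) < 2 ^ E := by positivity
  have h2pos' : (0 : ℝ) < 2 ^ (n - 1) := by positivity
  have havg : (∑ o : Orientation' n, (hamCount n o : ℝ)) / (Fintype.card (Orientation' n) : ℝ)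
      = (Nat.factorial n : ℝ) / 2 ^ (n - 1) := by
    rw [hsumR, hcardO]
    push_cast
    rw [div_eq_div_iff (by positivity) (ne_of_gt h2pos')]
    rw [mul_assoc, ← pow_add, Nat.sub_add_cancel hEk]
  refine ⟨havg, ?_⟩
  have hcpos : (0 : ℝ) < (Fintype.card (Orientation' n) : ℝ) := by
    rw [hcardO]; positivity
  have hsum_le : ∑ o : Orientation' n, ((Nat.factorial n : ℝ) / 2 ^ (n - 1))
      ≤ ∑ o : Orientation' n, (hamCount n o : ℝ) := by
    rw [Finset.sum_const, nsmul_eq_mul]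
    have : ∑ o : Orientation' n, (hamCount n o : ℝ)
        = (Fintype.card (Orientation' n) : ℝ) * ((Nat.factorial n : ℝ) / 2 ^ (n - 1)) := by
      rw [← havg, mul_div_cancel₀ _ (ne_of_gt hcpos)]
    rw [this]
    simp [Finset.card_univ]
  obtain ⟨o, -, ho⟩ := Finset.exists_le_of_sum_le Finset.univ_nonempty hsum_le
  exact ⟨o, ho⟩
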